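/- For every refining Möbius map μ and every infinite stream α of digits from {L, R, M}, there exist n ∈ ℕ and φ ∈ {L, R, M} such that (μ ∘ α₀ ∘ α₁ ∘ ... ∘ α_{n-1})([-1,1]) ⊆ φ([-1,1]). -/

import Mathlib

noncomputable def digitL : ℝ → ℝ := fun x => (x - 1) / (x + 3)
noncomputable def digitR : ℝ → ℝ := fun x => (x + 1) / (-x + 3)
noncomputable def digitM : ℝ → ℝ := fun x => x / 3

noncomputable def compStream (α : ℕ → ℝ → ℝ) : ℕ → ℝ → ℝ
  | 0 => id
  | k + 1 => compStream α k ∘ α k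

open Set

lemma LneR : digitL ≠ digitR := by
  intro h
  have := congrFun h 1
  norm_num [digitL, digitR] at this

lemma LneM : digitL ≠ digitM := by
  intro h
  have := congrFun h 1
  norm_num [digitL, digitM] at this

lemma RneM : digitR ≠ digitM := by
  intro h
  have := congrFun h 1
  norm_num [digitR, digitM] at this

lemma L_mem {x : ℝ} (hx : x ∈ Icc (-1:ℝ) 1) : digitL x ∈ Icc (-1:ℝ) 1 := by
  obtain ⟨h1, h2⟩ := hx
  have h3 : (0:ℝ) < x + 3 := by linarith
  constructor
  · rw [digitL, le_div_iff₀ h3]; ring_nf; linarith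
  · rw [digitL, div_le_iff₀ h3]; ring_nf; linarith

lemma R_mem {x : ℝ} (hx : x ∈ Icc (-1:ℝ) 1) : digitR x ∈ Icc (-1:ℝ) 1 := by
  obtain ⟨h1, h2⟩ := hx
  have h3 : (0:ℝ) < -x + 3 := by linarith
  constructor
  · rw [digitR, le_div_iff₀ h3]; ring_nf; linarith
  · rw [digitR, div_le_iff₀ h3]; ring_nf; linarith

lemma M_mem {x : ℝ} (hx : x ∈ Icc (-1:ℝ) 1) : digitM x ∈ Icc (-1:ℝ) 1 := by
  obtain ⟨h1, h2⟩ := hx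
  constructor
  · rw [digitM]; linarith
  · rw [digitM]; linarith

lemma digit_mem {f : ℝ → ℝ} (hf : f = digitL ∨ f = digitR ∨ f = digitM)
    {x : ℝ} (hx : x ∈ Icc (-1:ℝ) 1) : f x ∈ Icc (-1:ℝ) 1 := by
  rcases hf with h | h | h <;> subst h
  · exact L_mem hx
  · exact R_mem hx
  · exact M_mem hx

lemma compStream_mem {α : ℕ → ℝ → ℝ} (hα : ∀ i, α i = digitL ∨ α i = digitR ∨ α i = digitM)
    (n : ℕ) {x : ℝ} (hx : x ∈ Icc (-1:ℝ) 1) : compStream α n x ∈ Icc (-1:ℝ) 1 := by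
  induction n generalizing x with
  | zero => exact hx
  | succ k ih =>
    have : compStream α (k+1) x = compStream α k (α k x) := rfl
    rw [this]
    exact ih (digit_mem (hα k) hx)

lemma denom_pos {c d x : ℝ} (hp : 0 < c + d) (hq : 0 < d - c)
    (hx : x ∈ Icc (-1:ℝ) 1) : 0 < c * x + d := by
  obtain ⟨h1, h2⟩ := hx
  rcases le_or_gt x 0 with h | h
  · have k1 : (1:ℝ) * (d - c) ≤ (1 - x) * (d - c) :=
      mul_le_mul_of_nonneg_right (by linarith) hq.le
    have k2 : 0 ≤ (1 + x) * (c + d) := mul_nonneg (by linarith) hp.le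
    nlinarith
  · have k1 : (1:ℝ) * (c + d) ≤ (1 + x) * (c + d) :=
      mul_le_mul_of_nonneg_right (by linarith) hp.le
    have k2 : 0 ≤ (1 - x) * (d - c) := mul_nonneg (by linarith) hq.le
    nlinarith

lemma negL (x : ℝ) : -(digitL x) = digitR (-x) := by
  show -((x - 1) / (x + 3)) = (-x + 1) / (- -x + 3)
  rw [neg_neg, ← neg_div]
  ring_nf

lemma negR (x : ℝ) : -(digitR x) = digitL (-x) := by
  show -((x + 1) / (-x + 3)) = (-x - 1) / (-x + 3)
  rw [← neg_div]
  ring_nf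

lemma negM (x : ℝ) : -(digitM x) = digitM (-x) := by
  show -(x / 3) = -x / 3
  rw [neg_div]

lemma memL {t : ℝ} (h1 : -1 ≤ t) (h2 : t ≤ 0) : t ∈ digitL '' Icc (-1:ℝ) 1 := by
  refine ⟨(3*t+1)/(1-t), ⟨?_, ?_⟩, ?_⟩
  · rw [le_div_iff₀ (by linarith : (0:ℝ) < 1 - t)]; nlinarith
  · rw [div_le_iff₀ (by linarith : (0:ℝ) < 1 - t)]; nlinarith
  · have h3 : (1:ℝ) - t ≠ 0 := by linarith
    show ((3*t+1)/(1-t) - 1) / ((3*t+1)/(1-t) + 3) = t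
    rw [div_eq_iff (by
      have h4 : (3*t+1)/(1-t) + 3 = 4/(1-t) := by field_simp; ring
      rw [h4]
      positivity)]
    field_simp
    ring

lemma memR {t : ℝ} (h1 : 0 ≤ t) (h2 : t ≤ 1) : t ∈ digitR '' Icc (-1:ℝ) 1 := by
  refine ⟨(3*t-1)/(1+t), ⟨?_, ?_⟩, ?_⟩
  · rw [le_div_iff₀ (by linarith : (0:ℝ) < 1 + t)]; nlinarith
  · rw [div_le_iff₀ (by linarith : (0:ℝ) < 1 + t)]; nlinarith
  · have h3 : (1:ℝ) + t ≠ 0 := by linarith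
    show ((3*t-1)/(1+t) + 1) / (-((3*t-1)/(1+t)) + 3) = t
    rw [div_eq_iff (by
      have h4 : -((3*t-1)/(1+t)) + 3 = 4/(1+t) := by field_simp; ring
      rw [h4]
      positivity)]
    field_simp
    ring

lemma memM {t : ℝ} (h1 : -(1/3) ≤ t) (h2 : t ≤ 1/3) : t ∈ digitM '' Icc (-1:ℝ) 1 := by
  refine ⟨3*t, ⟨by linarith, by linarith⟩, ?_⟩
  rw [digitM]; ring

open scoped Classical in
noncomputable def seqQ (q0 : ℝ × ℝ × ℝ × ℝ) (α : ℕ → ℝ → ℝ) : ℕ → ℝ × ℝ × ℝ × ℝ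
  | 0 => q0
  | n + 1 =>
    let s := seqQ q0 α n
    if α n = digitL then (s.1 + s.2.1, 3*s.2.1 - s.1, s.2.2.1 + s.2.2.2, 3*s.2.2.2 - s.2.2.1)
    else if α n = digitR then (s.1 - s.2.1, s.1 + 3*s.2.1, s.2.2.1 - s.2.2.2, s.2.2.1 + 3*s.2.2.2)
    else (s.1, 3*s.2.1, s.2.2.1, 3*s.2.2.2)

set_option maxHeartbeats 1000000 in
lemma invariant (a b c d : ℝ) (α : ℕ → ℝ → ℝ)
    (hα : ∀ i, α i = digitL ∨ α i = digitR ∨ α i = digitM)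
    (hp : 0 < c + d) (hq : 0 < d - c) (hD : 0 < a*d - b*c) (n : ℕ) :
    (∀ x ∈ Icc (-1:ℝ) 1,
      (a * compStream α n x + b) / (c * compStream α n x + d)
        = ((seqQ (a,b,c,d) α n).1 * x + (seqQ (a,b,c,d) α n).2.1) /
          ((seqQ (a,b,c,d) α n).2.2.1 * x + (seqQ (a,b,c,d) α n).2.2.2))
    ∧ 0 < (seqQ (a,b,c,d) α n).2.2.1 + (seqQ (a,b,c,d) α n).2.2.2
    ∧ 0 < (seqQ (a,b,c,d) α n).2.2.2 - (seqQ (a,b,c,d) α n).2.2.1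
    ∧ 0 < (seqQ (a,b,c,d) α n).1 * (seqQ (a,b,c,d) α n).2.2.2
          - (seqQ (a,b,c,d) α n).2.1 * (seqQ (a,b,c,d) α n).2.2.1
    ∧ (min (c+d) (d-c))^2 * ((seqQ (a,b,c,d) α n).1 * (seqQ (a,b,c,d) α n).2.2.2
          - (seqQ (a,b,c,d) α n).2.1 * (seqQ (a,b,c,d) α n).2.2.1)
        ≤ ((seqQ (a,b,c,d) α n).2.2.1 + (seqQ (a,b,c,d) α n).2.2.2)^2 * (a*d - b*c)
    ∧ (min (c+d) (d-c))^2 * ((seqQ (a,b,c,d) α n).1 * (seqQ (a,b,c,d) α n).2.2.2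
          - (seqQ (a,b,c,d) α n).2.1 * (seqQ (a,b,c,d) α n).2.2.1)
        ≤ ((seqQ (a,b,c,d) α n).2.2.2 - (seqQ (a,b,c,d) α n).2.2.1)^2 * (a*d - b*c)
    ∧ (2*(c+d)*(d-c) + n * (min (c+d) (d-c))^2) * ((seqQ (a,b,c,d) α n).1 * (seqQ (a,b,c,d) α n).2.2.2
          - (seqQ (a,b,c,d) α n).2.1 * (seqQ (a,b,c,d) α n).2.2.1)
        ≤ 2 * (((seqQ (a,b,c,d) α n).2.2.1 + (seqQ (a,b,c,d) α n).2.2.2)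
             * ((seqQ (a,b,c,d) α n).2.2.2 - (seqQ (a,b,c,d) α n).2.2.1)) * (a*d - b*c) := by
  set e := min (c+d) (d-c) with he
  have he1 : e ≤ c + d := min_le_left _ _
  have he2 : e ≤ d - c := min_le_right _ _
  have he0 : 0 < e := lt_min hp hq
  induction n with
  | zero =>
    refine ⟨?_, hp, hq, hD, ?_, ?_, ?_⟩
    · intro x hx
      rfl
    · show e^2 * (a*d - b*c) ≤ (c+d)^2 * (a*d - b*c)
      have : e^2 ≤ (c+d)^2 := by nlinarith
      nlinarith
    · show e^2 * (a*d - b*c) ≤ (d-c)^2 * (a*d - b*c)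
      have : e^2 ≤ (d-c)^2 := by nlinarith
      nlinarith
    · show (2*(c+d)*(d-c) + (0:ℕ) * e^2) * (a*d - b*c) ≤ 2*((c+d)*(d-c)) * (a*d-b*c)
      push_cast
      ring_nf
      rfl
  | succ n ih =>
    obtain ⟨ihEq, ihp, ihq, ihD, ih4a, ih4b, ih5⟩ := ih
    have hcomp : ∀ x, compStream α (n+1) x = compStream α n (α n x) := fun x => rfl
    rcases hα n with hdig | hdig | hdig
    · -- L case
      have hstep : seqQ (a,b,c,d) α (n+1)
          = ((seqQ (a,b,c,d) α n).1 + (seqQ (a,b,c,d) α n).2.1,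
             3*(seqQ (a,b,c,d) α n).2.1 - (seqQ (a,b,c,d) α n).1,
             (seqQ (a,b,c,d) α n).2.2.1 + (seqQ (a,b,c,d) α n).2.2.2,
             3*(seqQ (a,b,c,d) α n).2.2.2 - (seqQ (a,b,c,d) α n).2.2.1) := by
        simp [seqQ, hdig]
      rw [hstep]
      set A := (seqQ (a,b,c,d) α n).1 with hA
      set B := (seqQ (a,b,c,d) α n).2.1 with hB
      set C := (seqQ (a,b,c,d) α n).2.2.1 with hC
      set Dd := (seqQ (a,b,c,d) α n).2.2.2 with hDd
      refine ⟨?_, by dsimp only; linarith, by dsimp only; linarith,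
        by dsimp only; linarith [ihD], ?_, ?_, ?_⟩
      · intro x hx
        dsimp only
        have hx3 : (0:ℝ) < x + 3 := by linarith [hx.1]
        have hLx : digitL x ∈ Icc (-1:ℝ) 1 := L_mem hx
        rw [hcomp x, hdig, ihEq _ hLx]
        have hden : 0 < C * digitL x + Dd := denom_pos ihp ihq hLx
        have hden2 : 0 < (C + Dd) * x + (3*Dd - C) := by
          have heq : (C + Dd) * x + (3*Dd - C) = (C * digitL x + Dd) * (x+3) := by
            simp only [digitL]
            field_simp
            ring
          rw [heq]
          positivity
        rw [div_eq_div_iff hden.ne' hden2.ne']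
        simp only [digitL]
        field_simp
        ring
      · dsimp only
        linarith [ih4b, mul_nonneg (mul_nonneg ihp.le ihp.le) hD.le,
          mul_nonneg (mul_nonneg ihp.le ihq.le) hD.le]
      · dsimp only
        linarith [ih4b]
      · dsimp only
        push_cast
        linarith [ih5, ih4b, mul_nonneg (sq_nonneg e) ihD.le]
    · -- R case
      have hstep : seqQ (a,b,c,d) α (n+1)
          = ((seqQ (a,b,c,d) α n).1 - (seqQ (a,b,c,d) α n).2.1,
             (seqQ (a,b,c,d) α n).1 + 3*(seqQ (a,b,c,d) α n).2.1,
             (seqQ (a,b,c,d) α n).2.2.1 - (seqQ (a,b,c,d) α n).2.2.2,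
             (seqQ (a,b,c,d) α n).2.2.1 + 3*(seqQ (a,b,c,d) α n).2.2.2) := by
        simp [seqQ, hdig, Ne.symm LneR]
      rw [hstep]
      set A := (seqQ (a,b,c,d) α n).1 with hA
      set B := (seqQ (a,b,c,d) α n).2.1 with hB
      set C := (seqQ (a,b,c,d) α n).2.2.1 with hC
      set Dd := (seqQ (a,b,c,d) α n).2.2.2 with hDd
      refine ⟨?_, by dsimp only; linarith, by dsimp only; linarith,
        by dsimp only; linarith [ihD], ?_, ?_, ?_⟩
      · intro x hx
        dsimp only
        have hx3 : (0:ℝ) < -x + 3 := by linarith [hx.2]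
        have hLx : digitR x ∈ Icc (-1:ℝ) 1 := R_mem hx
        rw [hcomp x, hdig, ihEq _ hLx]
        have hden : 0 < C * digitR x + Dd := denom_pos ihp ihq hLx
        have hden2 : 0 < (C - Dd) * x + (C + 3*Dd) := by
          have heq : (C - Dd) * x + (C + 3*Dd) = (C * digitR x + Dd) * (-x+3) := by
            simp only [digitR]
            field_simp
            ring
          rw [heq]
          positivity
        rw [div_eq_div_iff hden.ne' hden2.ne']
        simp only [digitR]
        field_simp
        ring
      · dsimp only
        linarith [ih4a]
      · dsimp only
        linarith [ih4a, mul_nonneg (mul_nonneg ihq.le ihq.le) hD.le,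
          mul_nonneg (mul_nonneg ihp.le ihq.le) hD.le]
      · dsimp only
        push_cast
        linarith [ih5, ih4a, mul_nonneg (sq_nonneg e) ihD.le]
    · -- M case
      have hstep : seqQ (a,b,c,d) α (n+1)
          = ((seqQ (a,b,c,d) α n).1, 3*(seqQ (a,b,c,d) α n).2.1,
             (seqQ (a,b,c,d) α n).2.2.1, 3*(seqQ (a,b,c,d) α n).2.2.2) := by
        simp [seqQ, hdig, Ne.symm LneM, Ne.symm RneM]
      rw [hstep]
      set A := (seqQ (a,b,c,d) α n).1 with hA
      set B := (seqQ (a,b,c,d) α n).2.1 with hB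
      set C := (seqQ (a,b,c,d) α n).2.2.1 with hC
      set Dd := (seqQ (a,b,c,d) α n).2.2.2 with hDd
      refine ⟨?_, by dsimp only; linarith, by dsimp only; linarith,
        by dsimp only; linarith [ihD], ?_, ?_, ?_⟩
      · intro x hx
        dsimp only
        have hLx : digitM x ∈ Icc (-1:ℝ) 1 := M_mem hx
        rw [hcomp x, hdig, ihEq _ hLx]
        have hden : 0 < C * digitM x + Dd := denom_pos ihp ihq hLx
        have hden2 : 0 < C * x + 3*Dd := by
          have heq : C * x + 3*Dd = (C * digitM x + Dd) * 3 := by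
            simp only [digitM]
            ring
          rw [heq]
          positivity
        rw [div_eq_div_iff hden.ne' hden2.ne']
        simp only [digitM]
        field_simp
      · dsimp only
        linarith [ih4a, ih4b, mul_nonneg (mul_nonneg ihp.le ihp.le) hD.le,
          mul_nonneg (mul_nonneg ihp.le ihq.le) hD.le,
          mul_nonneg (mul_nonneg ihq.le ihq.le) hD.le]
      · dsimp only
        linarith [ih4a, ih4b, mul_nonneg (mul_nonneg ihp.le ihp.le) hD.le,
          mul_nonneg (mul_nonneg ihp.le ihq.le) hD.le,
          mul_nonneg (mul_nonneg ihq.le ihq.le) hD.le]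
      · dsimp only
        push_cast
        linarith [ih5, ih4a, ih4b, mul_nonneg (sq_nonneg e) ihD.le,
          mul_nonneg (mul_nonneg ihp.le ihq.le) hD.le,
          mul_nonneg (mul_nonneg ihp.le ihp.le) hD.le,
          mul_nonneg (mul_nonneg ihq.le ihq.le) hD.le]

lemma main (a b c d : ℝ) (α : ℕ → ℝ → ℝ)
    (hα : ∀ i, α i = digitL ∨ α i = digitR ∨ α i = digitM)
    (hp : 0 < c + d) (hq : 0 < d - c) (hD : 0 < a*d - b*c)
    (hr : ∀ x ∈ Icc (-1:ℝ) 1, (a * x + b) / (c * x + d) ∈ Icc (-1:ℝ) 1) :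
    ∃ n : ℕ, ∃ φ ∈ ({digitL, digitR, digitM} : Set (ℝ → ℝ)),
      ∀ x ∈ Icc (-1:ℝ) 1,
        (a * compStream α n x + b) / (c * compStream α n x + d) ∈
          φ '' Icc (-1:ℝ) 1 := by
  set e := min (c+d) (d-c) with he
  have he0 : 0 < e := lt_min hp hq
  obtain ⟨n, hn⟩ := exists_nat_ge (12*(a*d-b*c)/e^2)
  obtain ⟨hEq, hp', hq', hD', h4a, h4b, h5⟩ := invariant a b c d α hα hp hq hD n
  set A := (seqQ (a,b,c,d) α n).1 with hA
  set B := (seqQ (a,b,c,d) α n).2.1 with hB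
  set C := (seqQ (a,b,c,d) α n).2.2.1 with hC
  set Dd := (seqQ (a,b,c,d) α n).2.2.2 with hDd
  have h12 : 12*(a*d-b*c) ≤ n * e^2 := by
    rw [div_le_iff₀ (pow_pos he0 2)] at hn
    linarith
  have key : 6 * (A*Dd - B*C) ≤ (C+Dd)*(Dd-C) := by
    nlinarith [h5, mul_le_mul_of_nonneg_right h12 hD'.le, mul_pos (mul_pos hp hq) hD', hD]
  have hmem : ∀ x ∈ Icc (-1:ℝ) 1,
      (a * compStream α n x + b)/(c * compStream α n x + d) ∈ Icc (-1:ℝ) 1 :=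
    fun x hx => hr _ (compStream_mem hα n hx)
  have hu1 : (B - A)/(Dd - C) ∈ Icc (-1:ℝ) 1 := by
    have h1 := hEq (-1) ⟨le_refl _, by norm_num⟩
    have h2 := hmem (-1) ⟨le_refl _, by norm_num⟩
    rw [h1] at h2
    have h3 : (A*(-1)+B)/(C*(-1)+Dd) = (B-A)/(Dd-C) := by ring_nf
    rwa [h3] at h2
  have hv1 : (A + B)/(C + Dd) ∈ Icc (-1:ℝ) 1 := by
    have h1 := hEq 1 ⟨by norm_num, le_refl _⟩
    have h2 := hmem 1 ⟨by norm_num, le_refl _⟩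
    rw [h1] at h2
    have h3 : (A*1+B)/(C*1+Dd) = (A+B)/(C+Dd) := by ring_nf
    rwa [h3] at h2
  have hlen : (A+B)/(C+Dd) - (B-A)/(Dd-C) ≤ 1/3 := by
    have hvu : (A+B)/(C+Dd) - (B-A)/(Dd-C) = 2*(A*Dd - B*C)/((C+Dd)*(Dd-C)) := by
      field_simp
      ring
    rw [hvu, div_le_div_iff₀ (mul_pos hp' hq') (by norm_num : (0:ℝ) < 3)]
    linarith
  have hbound : ∀ x ∈ Icc (-1:ℝ) 1,
      (B-A)/(Dd-C) ≤ (A*x+B)/(C*x+Dd) ∧ (A*x+B)/(C*x+Dd) ≤ (A+B)/(C+Dd) := by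
    intro x hx
    have hden := denom_pos hp' hq' hx
    constructor
    · rw [div_le_div_iff₀ hq' hden]
      have h0 : 0 ≤ (A*Dd - B*C)*(x+1) := mul_nonneg hD'.le (by linarith [hx.1])
      linarith
    · rw [div_le_div_iff₀ hden hp']
      have h0 : 0 ≤ (A*Dd - B*C)*(1-x) := mul_nonneg hD'.le (by linarith [hx.2])
      linarith
  rcases le_or_gt 0 ((B-A)/(Dd-C)) with hcase | hcase
  · refine ⟨n, digitR, by simp, fun x hx => ?_⟩
    rw [hEq x hx]
    exact memR (le_trans hcase (hbound x hx).1) (le_trans (hbound x hx).2 hv1.2)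
  · rcases le_or_gt ((A+B)/(C+Dd)) 0 with hcase2 | hcase2
    · refine ⟨n, digitL, by simp, fun x hx => ?_⟩
      rw [hEq x hx]
      exact memL (le_trans hu1.1 (hbound x hx).1) (le_trans (hbound x hx).2 hcase2)
    · refine ⟨n, digitM, by simp, fun x hx => ?_⟩
      rw [hEq x hx]
      refine memM ?_ ?_
      · have := (hbound x hx).1
        linarith
      · have := (hbound x hx).2
        linarith

lemma semimain (a b c d : ℝ) (hd : 0 < d)
    (hb : ∀ x ∈ Icc (-1:ℝ) 1, c * x + d ≠ 0)
    (hr : ∀ x ∈ Icc (-1:ℝ) 1, (a * x + b) / (c * x + d) ∈ Icc (-1:ℝ) 1)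
    (α : ℕ → ℝ → ℝ)
    (hα : ∀ i, α i = digitL ∨ α i = digitR ∨ α i = digitM) :
    ∃ n : ℕ, ∃ φ ∈ ({digitL, digitR, digitM} : Set (ℝ → ℝ)),
      ∀ x ∈ Icc (-1:ℝ) 1,
        (a * compStream α n x + b) / (c * compStream α n x + d) ∈
          φ '' Icc (-1:ℝ) 1 := by
  have hp : 0 < c + d := by
    rcases lt_trichotomy (c+d) 0 with h|h|h
    · exfalso
      have hc : c < 0 := by linarith
      have hx : (-d/c) ∈ Icc (-1:ℝ) 1 := by
        constructor
        · have h0 : 0 ≤ -d/c := div_nonneg_of_nonpos (by linarith) hc.le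
          linarith
        · rw [div_le_iff_of_neg hc]
          linarith
      refine hb _ hx ?_
      rw [mul_comm c (-d/c), div_mul_cancel₀ (-d) hc.ne]
      ring
    · exact absurd (show c*1+d = 0 by linear_combination h) (hb 1 ⟨by norm_num, le_refl _⟩)
    · exact h
  have hq : 0 < d - c := by
    rcases lt_trichotomy (d-c) 0 with h|h|h
    · exfalso
      have hc : 0 < c := by linarith
      have hx : (-d/c) ∈ Icc (-1:ℝ) 1 := by
      
        constructor
        · rw [le_div_iff₀ hc]
          linarith
        · have h0 : -d/c ≤ 0 := div_nonpos_of_nonpos_of_nonneg (by linarith) hc.le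
          linarith
      refine hb _ hx ?_
      rw [mul_comm c (-d/c), div_mul_cancel₀ (-d) hc.ne']
      ring
    · exact absurd (show c*(-1)+d = 0 by linear_combination h) (hb (-1) ⟨le_refl _, by norm_num⟩)
    · exact h
  rcases lt_trichotomy (a*d - b*c) 0 with hD|hD|hD
  · -- negative determinant: negate the numerator
    have hr' : ∀ x ∈ Icc (-1:ℝ) 1, ((-a) * x + (-b)) / (c * x + d) ∈ Icc (-1:ℝ) 1 := by
      intro x hx
      have h1 := hr x hx
      have hnv : ((-a) * x + (-b)) / (c * x + d) = -((a*x+b)/(c*x+d)) := by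
        rw [← neg_div]
        ring_nf
      rw [hnv]
      exact ⟨by linarith [h1.2], by linarith [h1.1]⟩
    obtain ⟨n, φ, hφ, hmain⟩ := main (-a) (-b) c d α hα hp hq (by linarith) hr'
    simp only [Set.mem_insert_iff, Set.mem_singleton_iff] at hφ
    have hval : ∀ x ∈ Icc (-1:ℝ) 1,
        (a * compStream α n x + b) / (c * compStream α n x + d)
          = -(((-a) * compStream α n x + (-b)) / (c * compStream α n x + d)) := by
      intro x hx
      rw [← neg_div]
      ring_nf
    rcases hφ with hφ | hφ | hφ
    · refine ⟨n, digitR, by simp, fun x hx => ?_⟩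
      obtain ⟨w, hw, hwEq⟩ := hmain x hx
      rw [hφ] at hwEq
      refine ⟨-w, ⟨by linarith [hw.2], by linarith [hw.1]⟩, ?_⟩
      rw [← negL w, hwEq, ← hval x hx]
    · refine ⟨n, digitL, by simp, fun x hx => ?_⟩
      obtain ⟨w, hw, hwEq⟩ := hmain x hx
      rw [hφ] at hwEq
      refine ⟨-w, ⟨by linarith [hw.2], by linarith [hw.1]⟩, ?_⟩
      rw [← negR w, hwEq, ← hval x hx]
    · refine ⟨n, digitM, by simp, fun x hx => ?_⟩
      obtain ⟨w, hw, hwEq⟩ := hmain x hx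
      rw [hφ] at hwEq
      refine ⟨-w, ⟨by linarith [hw.2], by linarith [hw.1]⟩, ?_⟩
      rw [← negM w, hwEq, ← hval x hx]
  · -- zero determinant: constant map
    refine ⟨0, ?_⟩
    have hval : ∀ x ∈ Icc (-1:ℝ) 1,
        (a * compStream α 0 x + b) / (c * compStream α 0 x + d) = b/d := by
      intro x hx
      show (a * x + b) / (c * x + d) = b/d
      have hden : 0 < c*x+d := denom_pos hp hq hx
      rw [div_eq_div_iff hden.ne' hd.ne']
      linear_combination x * hD
    have hbd : b/d ∈ Icc (-1:ℝ) 1 := by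
      have := hr 0 ⟨by norm_num, by norm_num⟩
      simpa using this
    rcases le_or_gt (b/d) 0 with h|h
    · exact ⟨digitL, by simp, fun x hx => by rw [hval x hx]; exact memL hbd.1 h⟩
    · exact ⟨digitR, by simp, fun x hx => by rw [hval x hx]; exact memR h.le hbd.2⟩
  · exact main a b c d α hα hp hq hD hr

theorem refining_eventually_emits (a b c d : ℝ)
    (hb : ∀ x ∈ Set.Icc (-1 : ℝ) 1, c * x + d ≠ 0)
    (hr : ∀ x ∈ Set.Icc (-1 : ℝ) 1, (a * x + b) / (c * x + d) ∈ Set.Icc (-1 : ℝ) 1)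
    (α : ℕ → ℝ → ℝ)
    (hα : ∀ i, α i = digitL ∨ α i = digitR ∨ α i = digitM) :
    ∃ n : ℕ, ∃ φ ∈ ({digitL, digitR, digitM} : Set (ℝ → ℝ)),
      ∀ x ∈ Set.Icc (-1 : ℝ) 1,
        (a * compStream α n x + b) / (c * compStream α n x + d) ∈
          φ '' Set.Icc (-1 : ℝ) 1 := by
  have hd0 : d ≠ 0 := by
    have := hb 0 ⟨by norm_num, by norm_num⟩
    simpa using this
  rcases hd0.lt_or_gt with hdneg | hdpos
  · have hb' : ∀ x ∈ Icc (-1:ℝ) 1, (-c) * x + (-d) ≠ 0 := by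
      intro x hx h
      exact hb x hx (by linarith)
    have heqv : ∀ y : ℝ, ((-a) * y + (-b)) / ((-c) * y + (-d)) = (a*y+b)/(c*y+d) := by
      intro y
      rw [show ((-a) * y + (-b)) = -(a*y+b) by ring, show ((-c) * y + (-d)) = -(c*y+d) by ring,
        neg_div_neg_eq]
    have hr' : ∀ x ∈ Icc (-1:ℝ) 1, ((-a) * x + (-b)) / ((-c) * x + (-d)) ∈ Icc (-1:ℝ) 1 := by
      intro x hx
      rw [heqv]
      exact hr x hx
    obtain ⟨n, φ, hφ, h⟩ := semimain (-a) (-b) (-c) (-d) (by linarith) hb' hr' α hα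
    refine ⟨n, φ, hφ, fun x hx => ?_⟩
    rw [← heqv (compStream α n x)]
    exact h x hx
  · exact semimain a b c d hdpos hb hr α hα
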